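/- Density-decomposition step: let G = 𝔽₂ⁿ, A ⊆ G, L ≤ G a subspace, M ≥ 1, and suppose Σ_x (A∘A)(x)·L(x) ≥ |L||A|/(8M). Writing A = ⊔_{λ ∈ G/L} A_λ with A_λ = A ∩ (L+λ) and Λ := {λ : |A_λ| ≥ |L|/(16M)}, the set A* := A ∩ (Λ + L) satisfies |A*| ≥ |A|/(16M) and |Λ|·|L| ≤ 16M|A|. -/

import Mathlib

open Finset Pointwise

lemma z2_add_self {n : ℕ} (v : Fin n → ZMod 2) : v + v = 0 := by
  funext i
  have h : ∀ a : ZMod 2, a + a = 0 := by decide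
  exact h (v i)

lemma z2_sub {n : ℕ} (a b : Fin n → ZMod 2) : a - b = a + b := by
  have h : -b = b := neg_eq_iff_add_eq_zero.mpr (z2_add_self b)
  rw [sub_eq_add_neg, h]

/-- Density decomposition: if `∑_x (A∘A)(x)L(x) ≥ |L||A|/(8M)`, then the union `A*` of the
pieces of `A` in cosets `L+λ` with `|A ∩ (L+λ)| ≥ |L|/(16M)` satisfies `|A*| ≥ |A|/(16M)`,
and these heavy cosets cover at most `16M|A|` elements (i.e. `|Λ||L| ≤ 16M|A|`). -/
theorem density_decomposition {n : ℕ} (A : Finset (Fin n → ZMod 2))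
    (L : AddSubgroup (Fin n → ZMod 2)) [DecidablePred (· ∈ L)]
    (M : ℝ) (hM : 1 ≤ M)
    (Lf : Finset (Fin n → ZMod 2)) (hLf : Lf = Finset.univ.filter (· ∈ L))
    (h : (∑ x : Fin n → ZMod 2,
        ((A ∩ (A + ({x} : Finset (Fin n → ZMod 2)))).card : ℝ) *
          (if x ∈ L then 1 else 0)) ≥ (Lf.card : ℝ) * A.card / (8 * M)) :
    ((A.filter fun a =>
        (Lf.card : ℝ) ≤ 16 * M * (A.filter fun b => b - a ∈ L).card).card : ℝ) ≥
      (A.card : ℝ) / (16 * M) ∧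
    (((A.filter fun a =>
        (Lf.card : ℝ) ≤ 16 * M * (A.filter fun b => b - a ∈ L).card) + Lf).card : ℝ) ≤
      16 * M * A.card := by
  classical
  have hM0 : (0:ℝ) < M := lt_of_lt_of_le one_pos hM
  have hmemLf : ∀ x, x ∈ Lf ↔ x ∈ L := by
    intro x; rw [hLf]; simp
  have hLf0 : (0 : Fin n → ZMod 2) ∈ Lf := (hmemLf 0).mpr (zero_mem L)
  have hN1 : 1 ≤ Lf.card := Finset.card_pos.mpr ⟨0, hLf0⟩
  set f : (Fin n → ZMod 2) → ℕ := fun y => (A.filter fun b => b - y ∈ L).card with hf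
  -- Step 1: the autocorrelation sum equals ∑_{y ∈ A} f y
  have hinter : ∀ x : Fin n → ZMod 2,
      A ∩ (A + ({x} : Finset (Fin n → ZMod 2))) = A.filter (fun y => y - x ∈ A) := by
    intro x
    ext y
    simp only [Finset.mem_inter, Finset.mem_filter, Finset.mem_add, Finset.mem_singleton]
    constructor
    · rintro ⟨hy, a, ha, z, rfl, rfl⟩
      exact ⟨hy, by rwa [add_sub_cancel_right]⟩
    · rintro ⟨hy, hyx⟩
      exact ⟨hy, y - x, hyx, x, rfl, by rw [z2_sub, add_assoc, z2_add_self, add_zero]⟩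
  have hswap : ∑ x ∈ Lf, (A ∩ (A + ({x} : Finset (Fin n → ZMod 2)))).card
      = ∑ y ∈ A, f y := by
    calc ∑ x ∈ Lf, (A ∩ (A + ({x} : Finset (Fin n → ZMod 2)))).card
        = ∑ x ∈ Lf, ∑ y ∈ A, (if y - x ∈ A then 1 else 0) := by
          refine Finset.sum_congr rfl fun x _ => ?_
          rw [hinter x, Finset.card_filter]
      _ = ∑ y ∈ A, ∑ x ∈ Lf, (if y - x ∈ A then 1 else 0) := Finset.sum_comm
      _ = ∑ y ∈ A, (Lf.filter fun x => y - x ∈ A).card := by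
          refine Finset.sum_congr rfl fun y _ => ?_
          rw [Finset.card_filter]
      _ = ∑ y ∈ A, f y := by
          refine Finset.sum_congr rfl fun y _ => ?_
          refine Finset.card_bij' (fun x _ => y - x) (fun b _ => y - b) ?_ ?_ ?_ ?_
          · intro x hx
            rw [Finset.mem_filter] at hx
            rw [Finset.mem_filter]
            refine ⟨hx.2, ?_⟩
            have : y - x - y = x := by
              rw [z2_sub, z2_sub, add_comm y x, add_assoc, z2_add_self, add_zero]
            rw [this]
            exact (hmemLf x).mp hx.1
          · intro b hb
            rw [Finset.mem_filter] at hb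
            simp only [Finset.mem_filter]
            have h1 : y - (y - b) = b := by
              rw [z2_sub, z2_sub, ← add_assoc, z2_add_self, zero_add]
            refine ⟨(hmemLf _).mpr ?_, by rw [h1]; exact hb.1⟩
            have h2 : y - b = b - y := by rw [z2_sub, z2_sub, add_comm]
            rw [h2]; exact hb.2
          · intro x _
            show y - (y - x) = x
            rw [z2_sub, z2_sub, ← add_assoc, z2_add_self, zero_add]
          · intro b _
            show y - (y - b) = b
            rw [z2_sub, z2_sub, ← add_assoc, z2_add_self, zero_add]
  have hsum : (Lf.card : ℝ) * A.card / (8 * M) ≤ ∑ y ∈ A, (f y : ℝ) := by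
    have hrw : (∑ x : Fin n → ZMod 2,
        ((A ∩ (A + ({x} : Finset (Fin n → ZMod 2)))).card : ℝ) *
          (if x ∈ L then 1 else 0)) = ∑ y ∈ A, (f y : ℝ) := by
      rw [show (∑ x : Fin n → ZMod 2,
        ((A ∩ (A + ({x} : Finset (Fin n → ZMod 2)))).card : ℝ) *
          (if x ∈ L then 1 else 0)) = ∑ x ∈ Finset.univ.filter (· ∈ L),
          ((A ∩ (A + ({x} : Finset (Fin n → ZMod 2)))).card : ℝ) from by
        rw [Finset.sum_filter]; exact Finset.sum_congr rfl fun x _ => by split <;> simp]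
      rw [← hLf]
      exact_mod_cast congrArg (Nat.cast : ℕ → ℝ) hswap
    rw [← hrw]; exact h
  -- f y ≤ Lf.card
  have hfle : ∀ y, f y ≤ Lf.card := by
    intro y
    refine Finset.card_le_card_of_injOn (fun b => b - y) ?_ ?_
    · intro b hb
      rw [Finset.mem_coe, Finset.mem_filter] at hb
      exact (hmemLf _).mpr hb.2
    · intro a _ b _ hab
      simpa using sub_left_injective hab
  set P : (Fin n → ZMod 2) → Prop :=
    fun a => (Lf.card : ℝ) ≤ 16 * M * (A.filter fun b => b - a ∈ L).card with hP
  set Astar := A.filter P with hAstar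
  have hsplit : ∑ y ∈ A, (f y : ℝ)
      = ∑ y ∈ Astar, (f y : ℝ) + ∑ y ∈ A.filter (fun y => ¬ P y), (f y : ℝ) :=
    (Finset.sum_filter_add_sum_filter_not A P _).symm
  have hb1 : ∑ y ∈ Astar, (f y : ℝ) ≤ Astar.card * Lf.card := by
    calc ∑ y ∈ Astar, (f y : ℝ) ≤ ∑ _y ∈ Astar, (Lf.card : ℝ) :=
      Finset.sum_le_sum fun y _ => by exact_mod_cast hfle y
    _ = Astar.card * Lf.card := by rw [Finset.sum_const, nsmul_eq_mul]
  have hb2 : ∑ y ∈ A.filter (fun y => ¬ P y), (f y : ℝ)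
      ≤ A.card * (Lf.card / (16 * M)) := by
    calc ∑ y ∈ A.filter (fun y => ¬ P y), (f y : ℝ)
        ≤ ∑ _y ∈ A.filter (fun y => ¬ P y), ((Lf.card : ℝ) / (16 * M)) := by
          refine Finset.sum_le_sum fun y hy => ?_
          rw [Finset.mem_filter] at hy
          have := hy.2
          rw [hP] at this
          push_neg at this
          have h16 : (0:ℝ) < 16 * M := by positivity
          rw [le_div_iff₀ h16]
          exact le_of_lt (by linarith [this])
      _ ≤ ∑ _y ∈ A, ((Lf.card : ℝ) / (16 * M)) := by
          refine Finset.sum_le_sum_of_subset_of_nonneg (Finset.filter_subset _ _)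
            fun y _ _ => by positivity
      _ = A.card * (Lf.card / (16 * M)) := by rw [Finset.sum_const, nsmul_eq_mul]
  have hNpos : (0:ℝ) < Lf.card := by exact_mod_cast hN1
  have hApos : (0:ℝ) ≤ A.card := Nat.cast_nonneg _
  have claim1 : ((Astar.card : ℝ)) ≥ (A.card : ℝ) / (16 * M) := by
    have hineq : (Lf.card : ℝ) * A.card / (8 * M)
        ≤ Astar.card * Lf.card + A.card * (Lf.card / (16 * M)) := by
      calc (Lf.card : ℝ) * A.card / (8 * M) ≤ ∑ y ∈ A, (f y : ℝ) := hsum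
        _ = _ := hsplit
        _ ≤ _ := add_le_add hb1 hb2
    have h8 : (0:ℝ) < 8 * M := by positivity
    have h16 : (0:ℝ) < 16 * M := by positivity
    rw [ge_iff_le, div_le_iff₀ h16]
    rw [div_le_iff₀ h8] at hineq
    have hexp : ((Astar.card : ℝ) * Lf.card + A.card * (Lf.card / (16 * M))) * (8 * M)
        = 8 * M * Astar.card * Lf.card + A.card * Lf.card / 2 := by
      field_simp
      ring
    rw [hexp] at hineq
    nlinarith [hineq, hNpos, hM0]
  refine ⟨claim1, ?_⟩
  -- Claim 2
  set T := Astar + Lf with hT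
  have hTbound : ∀ y ∈ T, (Lf.card : ℝ) ≤ 16 * M * (f y) := by
    intro y hy
    rw [hT, Finset.mem_add] at hy
    obtain ⟨a, ha, l, hl, rfl⟩ := hy
    rw [hAstar, Finset.mem_filter] at ha
    have hlL : l ∈ L := (hmemLf l).mp hl
    have hfeq : f (a + l) = f a := by
      apply congrArg Finset.card
      apply Finset.filter_congr
      intro b _
      have hrw : b - (a + l) = (b - a) - l := by ring
      simp only [hrw]
      constructor
      · intro hmem
        have := L.add_mem hmem hlL
        rwa [sub_add_cancel] at this
      · intro hmem
        exact L.sub_mem hmem hlL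
    rw [hfeq]
    exact ha.2
  have hcount : ∑ y ∈ T, f y = ∑ b ∈ A, (T.filter fun y => b - y ∈ L).card := by
    calc ∑ y ∈ T, f y = ∑ y ∈ T, ∑ b ∈ A, (if b - y ∈ L then 1 else 0) := by
          refine Finset.sum_congr rfl fun y _ => ?_
          rw [hf]; exact Finset.card_filter _ _
      _ = ∑ b ∈ A, ∑ y ∈ T, (if b - y ∈ L then 1 else 0) := Finset.sum_comm
      _ = ∑ b ∈ A, (T.filter fun y => b - y ∈ L).card := by
          refine Finset.sum_congr rfl fun b _ => (Finset.card_filter _ _).symm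
  have hcb : ∀ b, (T.filter fun y => b - y ∈ L).card ≤ Lf.card := by
    intro b
    refine Finset.card_le_card_of_injOn (fun y => b - y) ?_ ?_
    · intro y hy
      rw [Finset.mem_coe, Finset.mem_filter] at hy
      exact (hmemLf _).mpr hy.2
    · intro a _ c _ hac
      simpa using sub_right_injective hac
  have hTsum : (Lf.card : ℝ) * T.card ≤ 16 * M * (A.card * Lf.card) := by
    calc (Lf.card : ℝ) * T.card = ∑ _y ∈ T, (Lf.card : ℝ) := by
          rw [Finset.sum_const, nsmul_eq_mul]; ring
      _ ≤ ∑ y ∈ T, 16 * M * (f y : ℝ) := Finset.sum_le_sum hTbound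
      _ = 16 * M * ∑ y ∈ T, (f y : ℝ) := by rw [Finset.mul_sum]
      _ = 16 * M * ((∑ y ∈ T, f y : ℕ) : ℝ) := by rw [Nat.cast_sum]
      _ = 16 * M * ((∑ b ∈ A, (T.filter fun y => b - y ∈ L).card : ℕ) : ℝ) := by
          rw [hcount]
      _ ≤ 16 * M * (A.card * Lf.card) := by
          refine mul_le_mul_of_nonneg_left ?_ (by positivity)
          rw [Nat.cast_sum]
          calc ∑ b ∈ A, ((T.filter fun y => b - y ∈ L).card : ℝ)
              ≤ ∑ _b ∈ A, (Lf.card : ℝ) :=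
                Finset.sum_le_sum fun b _ => by exact_mod_cast hcb b
            _ = A.card * Lf.card := by rw [Finset.sum_const, nsmul_eq_mul]
  have : (T.card : ℝ) ≤ 16 * M * A.card := by
    have := hTsum
    rw [mul_comm (Lf.card : ℝ) (T.card : ℝ)] at this
    have h2 : 16 * M * ((A.card : ℝ) * Lf.card) = (16 * M * A.card) * Lf.card := by ring
    rw [h2] at this
    exact le_of_mul_le_mul_right this hNpos
  exact this
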